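/- arXiv:2309.06063 — 3 statements merged into one kernel-verified Lean document; each statement's English description precedes it below -/
import Mathlib

section
/- Characterization of invariance: let R be a nonzero commutative ring, S a linearly ordered set, H an augmented hypergraph on S, and s ∈ S. Then (1) ∂_i/∂s maps R_{n+1}(H) into R_n(H) for every n ≥ 0 and every 0 ≤ i ≤ n+1 if and only if for every σ ∈ H with s ∈ σ, if σ ∖ {s} ≠ ∅ then σ ∖ {s} ∈ H; and (2) π ∘ d_i s maps R_n(H) into R_{n+1}(H) for every n ≥ 0 and every 0 ≤ i ≤ n+1 if and only if for every nonempty σ ∈ H with s ∉ σ, one has σ ∪ {s} ∈ H. -/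
/-!
R⟨S⟩ₙ, the free R-module on words of length n+1 on a linearly ordered vertex
type S, is modeled as `(Fin (n+1) → S) →₀ R`. `pd R s n i = ∂ᵢ/∂s`,
`dd R s n i = dᵢs`, and `proj R k = π` is the projection onto the span of the
simplicial acyclic (strictly monotone) words. A hyperedge σ (a `Finset S`) with
σ.card = k is identified with its strictly increasing word `σ.orderEmbOfFin h`,
and `RH R k H` is the submodule Rₖ₋₁(H) spanned by the hyperedges of H with k
elements. Thus R_{n}(H) = `RH R (n+1) H`.
-/

noncomputable def pd {S : Type*} [DecidableEq S] (R : Type*) [CommRing R]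
    (s : S) (n : ℕ) (i : Fin (n + 1)) :
    ((Fin (n + 1) → S) →₀ R) →ₗ[R] ((Fin n → S) →₀ R) :=
  Finsupp.lift ((Fin n → S) →₀ R) R (Fin (n + 1) → S) fun w =>
    if w i = s then ((-1 : R) ^ (i : ℕ)) • Finsupp.single (i.removeNth w) 1 else 0

noncomputable def dd {S : Type*} (R : Type*) [CommRing R]
    (s : S) (n : ℕ) (i : Fin (n + 1)) :
    ((Fin n → S) →₀ R) →ₗ[R] ((Fin (n + 1) → S) →₀ R) :=
  Finsupp.lift ((Fin (n + 1) → S) →₀ R) R (Fin n → S) fun w =>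
    ((-1 : R) ^ (i : ℕ)) • Finsupp.single (i.insertNth s w) 1

open Classical in
noncomputable def proj {S : Type*} [LinearOrder S] (R : Type*) [CommRing R] (n : ℕ) :
    ((Fin n → S) →₀ R) →ₗ[R] ((Fin n → S) →₀ R) :=
  Finsupp.lift ((Fin n → S) →₀ R) R (Fin n → S) fun w =>
    if StrictMono w then Finsupp.single w 1 else 0

noncomputable def RH {S : Type*} [LinearOrder S] (R : Type*) [CommRing R] (n : ℕ)
    (H : Set (Finset S)) : Submodule R ((Fin n → S) →₀ R) :=
  Submodule.span R
    {x | ∃ σ ∈ H, ∃ h : σ.card = n, x = Finsupp.single (⇑(σ.orderEmbOfFin h)) 1}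

section aux
variable {S : Type*} [LinearOrder S] {R : Type*} [CommRing R]

def wordSet (H : Set (Finset S)) (n : ℕ) : Set (Fin n → S) :=
  {w | ∃ σ ∈ H, ∃ h : σ.card = n, w = ⇑(σ.orderEmbOfFin h)}

lemma RH_eq_supported (n : ℕ) (H : Set (Finset S)) :
    RH R n H = Finsupp.supported R R (wordSet H n) := by
  rw [Finsupp.supported_eq_span_single, RH]
  congr 1
  ext x
  constructor
  · rintro ⟨σ, hσ, h, rfl⟩
    exact ⟨_, ⟨σ, hσ, h, rfl⟩, rfl⟩
  · rintro ⟨w, ⟨σ, hσ, h, rfl⟩, rfl⟩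
    exact ⟨σ, hσ, h, rfl⟩

lemma single_mem_RH_iff [Nontrivial R] {n : ℕ} {H : Set (Finset S)} {w : Fin n → S} {c : R}
    (hc : c ≠ 0) : Finsupp.single w c ∈ RH R n H ↔ w ∈ wordSet H n := by
  rw [RH_eq_supported, Finsupp.mem_supported, Finsupp.support_single_ne_zero _ hc]
  simp

lemma single_mem_RH {n : ℕ} {H : Set (Finset S)} {w : Fin n → S} (c : R)
    (h : w ∈ wordSet H n) : Finsupp.single w c ∈ RH R n H := by
  rw [RH_eq_supported, Finsupp.mem_supported]
  intro x hx
  simp only [Finset.mem_coe] at hx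
  have := Finsupp.support_single_subset hx
  simp only [Finset.mem_singleton] at this
  exact this ▸ h

lemma mem_wordSet {n : ℕ} {H : Set (Finset S)} {σ : Finset S} (hσ : σ ∈ H)
    (h : σ.card = n) {w : Fin n → S} (hm : StrictMono w) (hr : ∀ i, w i ∈ σ) :
    w ∈ wordSet H n :=
  ⟨σ, hσ, h, Finset.orderEmbOfFin_unique h hr hm⟩

lemma wordSet_mem_H {n : ℕ} {H : Set (Finset S)} {τ : Finset S} (hcard : τ.card = n)
    {w : Fin n → S} (hw : w ∈ wordSet H n) (hm : StrictMono w) (hr : ∀ i, w i ∈ τ) :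
    τ ∈ H := by
  obtain ⟨ρ, hρ, h, rfl⟩ := hw
  have heq : ⇑(ρ.orderEmbOfFin h) = ⇑(τ.orderEmbOfFin hcard) :=
    Finset.orderEmbOfFin_unique hcard hr hm
  have hranges : (ρ : Set S) = (τ : Set S) := by
    rw [← Finset.range_orderEmbOfFin ρ h, ← Finset.range_orderEmbOfFin τ hcard, heq]
  exact (Finset.coe_injective hranges) ▸ hρ

lemma pd_single [DecidableEq S] (s : S) (n : ℕ) (i : Fin (n + 1)) (w : Fin (n + 1) → S) :
    pd R s n i (Finsupp.single w (1 : R)) =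
      if w i = s then Finsupp.single (i.removeNth w) ((-1 : R) ^ (i : ℕ)) else 0 := by
  rw [pd, Finsupp.lift_apply, Finsupp.sum_single_index (by simp)]
  split <;> simp [Finsupp.smul_single]

lemma dd_single (s : S) (n : ℕ) (i : Fin (n + 1)) (w : Fin n → S) :
    dd R s n i (Finsupp.single w (1 : R)) =
      Finsupp.single (i.insertNth s w) ((-1 : R) ^ (i : ℕ)) := by
  rw [dd, Finsupp.lift_apply, Finsupp.sum_single_index (by simp)]
  simp [Finsupp.smul_single]

open Classical in
lemma proj_single (n : ℕ) (w : Fin n → S) (c : R) :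
    proj R n (Finsupp.single w c) = if StrictMono w then Finsupp.single w c else 0 := by
  rw [proj, Finsupp.lift_apply, Finsupp.sum_single_index (by simp)]
  split <;> simp [Finsupp.smul_single]


lemma neg_one_pow_ne_zero_aux [Nontrivial R] (k : ℕ) : ((-1 : R) ^ k) ≠ 0 :=
  (isUnit_one.neg.pow k).ne_zero

end aux


/-- characterization of invariance: let R be a nonzero commutative
ring, S a linearly ordered vertex type, H an augmented hypergraph on S and s ∈ S.
(1) ∂ᵢ/∂s maps R_{n+1}(H) into R_n(H) for every n ≥ 0 and 0 ≤ i ≤ n+1 iff for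
every σ ∈ H with s ∈ σ, σ ∖ {s} ≠ ∅ implies σ ∖ {s} ∈ H.
(2) π ∘ dᵢs maps R_n(H) into R_{n+1}(H) for every n ≥ 0 and 0 ≤ i ≤ n+1 iff for
every nonempty σ ∈ H with s ∉ σ, σ ∪ {s} ∈ H. -/
theorem invariance_characterization {S : Type*} [LinearOrder S]
    (R : Type*) [CommRing R] [Nontrivial R]
    (H : Set (Finset S)) (s : S) :
    ((∀ (n : ℕ) (i : Fin (n + 2)), ∀ x ∈ RH R (n + 2) H,
        pd R s (n + 1) i x ∈ RH R (n + 1) H)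
      ↔ (∀ σ ∈ H, s ∈ σ → σ.erase s ≠ ∅ → σ.erase s ∈ H))
    ∧ ((∀ (n : ℕ) (i : Fin (n + 2)), ∀ x ∈ RH R (n + 1) H,
        proj R (n + 2) (dd R s (n + 1) i x) ∈ RH R (n + 2) H)
      ↔ (∀ σ ∈ H, σ ≠ ∅ → s ∉ σ → insert s σ ∈ H)) := by
  constructor
  · constructor
    · -- forward (1)
      intro hP σ hσ hs hne
      have h1 : 0 < (σ.erase s).card := Finset.card_pos.mpr (Finset.nonempty_of_ne_empty hne)
      have h2 := Finset.card_erase_of_mem hs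
      obtain ⟨n, hn⟩ : ∃ n, σ.card = n + 2 := ⟨σ.card - 2, by omega⟩
      set w := ⇑(σ.orderEmbOfFin hn) with hw
      have hrange : Set.range w = ↑σ := Finset.range_orderEmbOfFin σ hn
      obtain ⟨i, hi⟩ : ∃ i, w i = s := by
        have : s ∈ Set.range w := by rw [hrange]; exact_mod_cast hs
        exact this
      have hmem : Finsupp.single w (1 : R) ∈ RH R (n + 2) H :=
        single_mem_RH _ ⟨σ, hσ, hn, rfl⟩
      have hres := hP n i _ hmem
      rw [pd_single, if_pos hi] at hres
      have hwm : StrictMono w := (σ.orderEmbOfFin hn).strictMono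
      have hmono : StrictMono (i.removeNth w) := hwm.comp (Fin.strictMono_succAbove i)
      have hvals : ∀ j, i.removeNth w j ∈ σ.erase s := by
        intro j
        refine Finset.mem_erase.mpr ⟨?_, ?_⟩
        · intro hcontra
          exact Fin.succAbove_ne i j (hwm.injective (hcontra.trans hi.symm))
        · have : i.removeNth w j ∈ Set.range w := ⟨_, rfl⟩
          rw [hrange] at this
          exact_mod_cast this
      have hcard : (σ.erase s).card = n + 1 := by omega
      exact wordSet_mem_H hcard
        ((single_mem_RH_iff (neg_one_pow_ne_zero_aux _)).mp hres) hmono hvals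
    · -- reverse (1)
      intro hH n i
      have hle : RH R (n + 2) H ≤
          Submodule.comap (pd R s (n + 1) i) (RH R (n + 1) H) := by
        rw [RH, Submodule.span_le]
        rintro x ⟨σ, hσ, h, rfl⟩
        simp only [SetLike.mem_coe, Submodule.mem_comap]
        rw [pd_single]
        split
        case isTrue hi =>
          set w := ⇑(σ.orderEmbOfFin h) with hw
          have hrange : Set.range w = ↑σ := Finset.range_orderEmbOfFin σ h
          have hwm : StrictMono w := (σ.orderEmbOfFin h).strictMono
          have hs : s ∈ σ := by
            have : w i ∈ Set.range w := ⟨_, rfl⟩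
            rw [hrange, hi] at this
            exact_mod_cast this
          have hcard : (σ.erase s).card = n + 1 := by
            rw [Finset.card_erase_of_mem hs, h]; omega
          have hτ : σ.erase s ∈ H := by
            refine hH σ hσ hs ?_
            intro hempty
            rw [hempty] at hcard
            simp at hcard
          refine single_mem_RH _ (mem_wordSet hτ hcard
            (hwm.comp (Fin.strictMono_succAbove i)) ?_)
          intro j
          refine Finset.mem_erase.mpr ⟨?_, ?_⟩
          · intro hcontra
            exact Fin.succAbove_ne i j (hwm.injective (hcontra.trans hi.symm))
          · have : i.removeNth w j ∈ Set.range w := ⟨_, rfl⟩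
            rw [hrange] at this
            exact_mod_cast this
        case isFalse => exact Submodule.zero_mem _
      exact fun x hx => hle hx
  · constructor
    · -- forward (2)
      intro hP σ hσ hne hs
      have h1 : 0 < σ.card := Finset.card_pos.mpr (Finset.nonempty_of_ne_empty hne)
      obtain ⟨n, hn⟩ : ∃ n, σ.card = n + 1 := ⟨σ.card - 1, by omega⟩
      have hρcard : (insert s σ).card = n + 2 := by
        rw [Finset.card_insert_of_notMem hs, hn]
      set w' := ⇑((insert s σ).orderEmbOfFin hρcard) with hw'
      have hrange' : Set.range w' = ↑(insert s σ) := Finset.range_orderEmbOfFin _ _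
      have hwm' : StrictMono w' := ((insert s σ).orderEmbOfFin hρcard).strictMono
      obtain ⟨i, hi⟩ : ∃ i, w' i = s := by
        have : s ∈ Set.range w' := by
          rw [hrange']; exact_mod_cast Finset.mem_insert_self s σ
        exact this
      set w := i.removeNth w' with hwdef
      have hw_eq : w = ⇑(σ.orderEmbOfFin hn) := by
        refine Finset.orderEmbOfFin_unique hn ?_ (hwm'.comp (Fin.strictMono_succAbove i))
        intro j
        have hmem1 : w j ∈ insert s σ := by
          have : w j ∈ Set.range w' := ⟨_, rfl⟩
          rw [hrange'] at this
          exact_mod_cast this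
        have hne2 : w j ≠ s := fun hc =>
          Fin.succAbove_ne i j (hwm'.injective (hc.trans hi.symm))
        rcases Finset.mem_insert.mp hmem1 with h | h
        · exact absurd h hne2
        · exact h
      have hmem : Finsupp.single w (1 : R) ∈ RH R (n + 1) H :=
        single_mem_RH _ ⟨σ, hσ, hn, hw_eq⟩
      have hres := hP n i _ hmem
      rw [dd_single] at hres
      have hins : i.insertNth s w = w' := by
        rw [← hi, hwdef]
        exact Fin.insertNth_self_removeNth i w'
      rw [hins, proj_single, if_pos hwm'] at hres
      refine wordSet_mem_H hρcard
        ((single_mem_RH_iff (neg_one_pow_ne_zero_aux _)).mp hres) hwm' ?_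
      intro j
      have : w' j ∈ Set.range w' := ⟨_, rfl⟩
      rw [hrange'] at this
      exact_mod_cast this
    · -- reverse (2)
      intro hH n i
      have hle : RH R (n + 1) H ≤
          Submodule.comap ((proj R (n + 2)).comp (dd R s (n + 1) i)) (RH R (n + 2) H) := by
        rw [RH, Submodule.span_le]
        rintro x ⟨σ, hσ, h, rfl⟩
        simp only [SetLike.mem_coe, Submodule.mem_comap, LinearMap.comp_apply]
        rw [dd_single, proj_single]
        split
        case isTrue hmono =>
          set w := ⇑(σ.orderEmbOfFin h) with hw
          have hrange : Set.range w = ↑σ := Finset.range_orderEmbOfFin σ h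
          have hvi : (i.insertNth s w : Fin (n + 2) → S) i = s := by simp
          have hvs : ∀ j, (i.insertNth s w : Fin (n + 2) → S) (i.succAbove j) = w j := fun j => by simp
          have hsnot : s ∉ σ := by
            intro hsmem
            obtain ⟨j, hj⟩ : ∃ j, w j = s := by
              have : s ∈ Set.range w := by rw [hrange]; exact_mod_cast hsmem
              exact this
            exact Fin.succAbove_ne i j (hmono.injective (by rw [hvs, hj, hvi]))
          have hne : σ ≠ ∅ := by
            intro hempty
            rw [hempty] at h
            simp at h
          have hins : insert s σ ∈ H := hH σ hσ hne hsnot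
          have hcard : (insert s σ).card = n + 2 := by
            rw [Finset.card_insert_of_notMem hsnot, h]
          refine single_mem_RH _ (mem_wordSet hins hcard hmono ?_)
          intro j
          rcases eq_or_ne j i with rfl | hji
          · rw [hvi]; exact Finset.mem_insert_self _ _
          · obtain ⟨k, rfl⟩ := Fin.exists_succAbove_eq hji
            rw [hvs]
            refine Finset.mem_insert_of_mem ?_
            have : w k ∈ Set.range w := ⟨_, rfl⟩
            rw [hrange] at this
            exact_mod_cast this
        case isFalse => exact Submodule.zero_mem _
      exact fun x hx => hle hx
end

section
/- Invariant traces are simplicial complexes: let H be an augmented hypergraph on S and let S(H,∂) = {s ∈ S : for every σ ∈ H with s ∈ σ, if σ ∖ {s} ≠ ∅ then σ ∖ {s} ∈ H} (the set of s for which R_*(H) is ∂/∂s-invariant). Then the trace H∥_{S(H,∂)} is an augmented simplicial complex on S(H,∂). Moreover, if K is an augmented simplicial complex on S, then S(K,∂) = S. -/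
/-!
An augmented hypergraph on a vertex type S is a set of finsets of S
(`Set (Finset S)`), possibly containing ∅. `finter σ T` is σ ∩ T for T ⊆ S and
`htrace H T` is the trace H∥_T. `IsASC` means augmented simplicial complex.
`Spart H = S(H,∂)` is the set of vertices s for which R_*(H) is ∂/∂s-invariant,
described combinatorially.
-/

noncomputable def finter {S : Type*} (σ : Finset S) (T : Set S) : Finset S :=
  @Finset.filter S (fun a => a ∈ T) (Classical.decPred _) σ

noncomputable def htrace {S : Type*} (H : Set (Finset S)) (T : Set S) :
    Set (Finset S) :=
  {τ | (∃ σ ∈ H, finter σ T = τ) ∧ τ ≠ ∅}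
    ∪ {τ | τ = ∅ ∧ (∅ : Finset S) ∈ H}

def IsASC {S : Type*} (H : Set (Finset S)) : Prop :=
  ∀ σ ∈ H, ∀ τ ⊆ σ, τ ≠ ∅ → τ ∈ H

def Spart {S : Type*} [DecidableEq S] (H : Set (Finset S)) : Set S :=
  {s | ∀ σ ∈ H, s ∈ σ → σ.erase s ≠ ∅ → σ.erase s ∈ H}


lemma finter_mem {S : Type*} {σ : Finset S} {T : Set S} {a : S} :
    a ∈ finter σ T ↔ a ∈ σ ∧ a ∈ T := by
  simp [finter]

lemma finter_erase {S : Type*} [DecidableEq S] (σ : Finset S) (T : Set S) (s : S) :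
    finter (σ.erase s) T = (finter σ T).erase s := by
  ext a; simp [finter_mem, Finset.mem_erase]; tauto

lemma trace_aux {S : Type*} [DecidableEq S] (H : Set (Finset S)) :
    ∀ n (σ : Finset S), σ ∈ H → ∀ τ ⊆ finter σ (Spart H), τ.Nonempty →
    (finter σ (Spart H) \ τ).card = n → ∃ σ' ∈ H, finter σ' (Spart H) = τ := by
  intro n
  induction n with
  | zero =>
    intro σ hσ τ hsub _ hcard
    refine ⟨σ, hσ, ?_⟩
    have : finter σ (Spart H) \ τ = ∅ := Finset.card_eq_zero.mp hcard
    exact Finset.Subset.antisymm (Finset.sdiff_eq_empty_iff_subset.mp this) hsub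
  | succ n ih =>
    intro σ hσ τ hsub hne hcard
    have hdne : (finter σ (Spart H) \ τ).Nonempty := by
      rw [← Finset.card_pos, hcard]; omega
    obtain ⟨s, hs⟩ := hdne
    rw [Finset.mem_sdiff] at hs
    obtain ⟨hsf, hsτ⟩ := hs
    have hsσ : s ∈ σ := (finter_mem.mp hsf).1
    have hsS : s ∈ Spart H := (finter_mem.mp hsf).2
    have hτe : τ ⊆ σ.erase s := by
      intro a ha
      exact Finset.mem_erase.mpr ⟨fun h => hsτ (h ▸ ha),
        (finter_mem.mp (hsub ha)).1⟩
    have hene : σ.erase s ≠ ∅ := by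
      obtain ⟨a, ha⟩ := hne
      exact Finset.ne_empty_of_mem (hτe ha)
    have hmem : σ.erase s ∈ H := hsS σ hσ hsσ hene
    apply ih (σ.erase s) hmem τ
    · rw [finter_erase]
      intro a ha
      exact Finset.mem_erase.mpr ⟨fun h => hsτ (h ▸ ha), hsub ha⟩
    · exact hne
    · rw [finter_erase, Finset.erase_sdiff_comm,
        Finset.card_erase_of_mem (Finset.mem_sdiff.mpr ⟨hsf, hsτ⟩), hcard]
      omega

/-- invariant traces are simplicial complexes: for every augmented
hypergraph H on S, the trace H∥_{S(H,∂)} is an augmented simplicial complex on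
S(H,∂); moreover if K is an augmented simplicial complex on S then S(K,∂) = S. -/
theorem trace_Spart_isASC {S : Type*} [DecidableEq S] (H : Set (Finset S)) :
    IsASC (htrace H (Spart H))
    ∧ (∀ K : Set (Finset S), IsASC K → Spart K = Set.univ) := by
  constructor
  · rintro σ hσ τ hτsub hτne
    rcases hσ with ⟨⟨σ', hσ', rfl⟩, _⟩ | ⟨rfl, _⟩
    · obtain ⟨σ'', hσ'', heq⟩ := trace_aux H _ σ' hσ' τ hτsub
        (Finset.nonempty_iff_ne_empty.mpr hτne) rfl
      exact Or.inl ⟨⟨σ'', hσ'', heq⟩, hτne⟩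
    · exact absurd (Finset.subset_empty.mp hτsub) hτne
  · intro K hK
    ext s
    simp only [Set.mem_univ, iff_true, Spart, Set.mem_setOf_eq]
    intro σ hσ _ hne
    exact hK σ hσ _ (Finset.erase_subset s σ) hne
end

section
/- Invariant traces are independence hypergraphs: let H be a hypergraph on S (an augmented hypergraph with ∅ ∉ H) and let S(H,d) = {s ∈ S : for every σ ∈ H with s ∉ σ, σ ∪ {s} ∈ H} (the set of s for which R_*(H) is ds-invariant). Then the trace H∥_{S(H,d)} is an independence hypergraph on S(H,d): every member of H∥_{S(H,d)} is nonempty, and every finite subset of S(H,d) containing a member of H∥_{S(H,d)} belongs to H∥_{S(H,d)}. Moreover, if L is an independence hypergraph on S (∅ ∉ L and every finite subset of S containing a member of L belongs to L), then S(L,d) = S. -/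
def IsAIH {S : Type*} (T : Set S) (H : Set (Finset S)) : Prop :=
  ∀ σ ∈ H, ∀ τ : Finset S, ↑τ ⊆ T → σ ⊆ τ → τ ∈ H

def Sd {S : Type*} [DecidableEq S] (H : Set (Finset S)) : Set S :=
  {s | ∀ σ ∈ H, s ∉ σ → insert s σ ∈ H}

/-- invariant traces are independence hypergraphs: let H be a
hypergraph on S (∅ ∉ H). Then every member of H∥_{S(H,d)} is nonempty and
H∥_{S(H,d)} is an independence hypergraph on S(H,d); moreover if L is an
independence hypergraph on S (∅ ∉ L and L upward closed among finite subsets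
of S) then S(L,d) = S. -/
theorem trace_Sd_isAIH {S : Type*} [DecidableEq S] (H : Set (Finset S))
    (hH : (∅ : Finset S) ∉ H) :
    ((∀ τ ∈ htrace H (Sd H), τ ≠ ∅) ∧ IsAIH (Sd H) (htrace H (Sd H)))
    ∧ (∀ L : Set (Finset S), (∅ : Finset S) ∉ L →
        IsAIH (Set.univ : Set S) L → Sd L = Set.univ) := by
  have key : ∀ (σ₀ : Finset S), σ₀ ∈ H → ∀ τ : Finset S, ↑τ ⊆ Sd H →
      σ₀ ∪ τ ∈ H := by
    intro σ₀ h₀ τ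
    induction τ using Finset.induction_on with
    | empty => intro _; simpa using h₀
    | @insert a τ ha ih =>
      intro hsub
      have hτ : ↑τ ⊆ Sd H := by
        intro x hx; exact hsub (by simp [hx])
      have haSd : a ∈ Sd H := hsub (by simp)
      have hmem := ih hτ
      rw [Finset.union_insert]
      by_cases hcase : a ∈ σ₀ ∪ τ
      · rwa [Finset.insert_eq_self.2 hcase]
      · exact haSd _ hmem hcase
  refine ⟨⟨?_, ?_⟩, ?_⟩
  · intro τ hτ
    rcases hτ with h | h
    · exact h.2
    · exact absurd h.2 hH
  · intro σ hσ τ hτsub hστ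
    rcases hσ with ⟨⟨σ₀, h₀, heq⟩, hne⟩ | h
    · left
      refine ⟨⟨σ₀ ∪ τ, key σ₀ h₀ τ hτsub, ?_⟩, ?_⟩
      · have h1 : finter (σ₀ ∪ τ) (Sd H) = finter σ₀ (Sd H) ∪ finter τ (Sd H) := by
          ext x; simp [finter]; tauto
        have h2 : finter τ (Sd H) = τ := by
          ext x
          simp only [finter, Finset.mem_filter, and_iff_left_iff_imp]
          exact fun hx => hτsub hx
        rw [h1, h2, heq]
        exact Finset.union_eq_right.2 hστ
      · intro h
        apply hne
        rw [h] at hστ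
        exact Finset.subset_empty.1 hστ
    · exact absurd h.2 hH
  · intro L hL hIL
    ext s
    simp only [Set.mem_univ, iff_true]
    intro σ hσ hs
    exact hIL σ hσ (insert s σ) (by simp) (Finset.subset_insert _ _)
end
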